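/- For the binary matrix H described in the context (p an odd prime, 1 ≤ w ≤ p), the kernel of the GF(2)-linear map v ↦ H·v from (ZMod 2)^{p⁴} to (ZMod 2)^{w·p²} has dimension (p² − w + 1)(p² − 1); that is, the 2-D classical QC-LDPC code with parity-check matrix H is a binary linear code of length p⁴ and dimension (p² − w + 1)(p² − 1). -/
import Mathlib

open Matrix

/-- The layer-by-layer unfolding of the 2-D QC-LDPC parity-check tensor: a binary matrix
with rows indexed by layers `ℓ ∈ {0,…,w·p²−1}` and columns indexed by positions
`(x, y)` with `x, y ∈ {0,…,p²−1}`; entry `(ℓ, (x, y))` equals `1` iff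
`x ≡ ℓ + ζ_{⌊ℓ/p²⌋}(⌊ℓ/p⌋) + ⌊ℓ/p²⌋·(φ(⌊x/p⌋) + ψ(⌊y/p⌋)) (mod p)` and
`y ≡ ℓ + ⌊ℓ/p²⌋·φ(⌊x/p⌋) (mod p)`. -/
def Hmat (p w : ℕ) (φ ψ : ZMod p → ZMod p) (ζ : ℕ → ZMod p → ZMod p) :
    Matrix (Fin (w * p ^ 2)) (Fin (p ^ 2) × Fin (p ^ 2)) (ZMod 2) :=
  fun ℓ xy =>
    if (((xy.1 : ℕ) : ZMod p) =
          ((ℓ : ℕ) : ZMod p) + ζ ((ℓ : ℕ) / p ^ 2) (((ℓ : ℕ) / p : ℕ) : ZMod p) +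
            (((ℓ : ℕ) / p ^ 2 : ℕ) : ZMod p) *
              (φ (((xy.1 : ℕ) / p : ℕ) : ZMod p) + ψ (((xy.2 : ℕ) / p : ℕ) : ZMod p)) ∧
        ((xy.2 : ℕ) : ZMod p) =
          ((ℓ : ℕ) : ZMod p) +
            (((ℓ : ℕ) / p ^ 2 : ℕ) : ZMod p) * φ (((xy.1 : ℕ) / p : ℕ) : ZMod p))
    then 1 else 0

section Aux

open Finset

private lemma lines_lemma {p : ℕ} (hp : p.Prime) (hodd : Odd p) :
    ∀ n, n ≤ p → ∀ f : ℕ → (ZMod p × ZMod p) → ZMod 2,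
      (∀ v u : ZMod p × ZMod p, ∑ m ∈ Finset.range n, f m (v + (m : ZMod p) • u) = 0) →
      ∀ m, m < n → ∀ v, f m v = f m 0 := by
  haveI : Fact p.Prime := ⟨hp⟩
  have htwo : (2 : ZMod 2) = 0 := rfl
  intro n
  induction n with
  | zero => intro _ _ _ m hm; exact absurd hm (Nat.not_lt_zero m)
  | succ n ih =>
    intro hnp f hf
    have hn : n ≤ p := Nat.le_of_succ_le hnp
    -- shifted difference functions are constant
    have hstep : ∀ k, k < n → ∀ (e x : ZMod p × ZMod p),
        f (k+1) (x + ((k+1 : ℕ) : ZMod p) • e) + f (k+1) x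
          = f (k+1) (((k+1 : ℕ) : ZMod p) • e) + f (k+1) 0 := by
      intro k hk e x
      set g : ℕ → (ZMod p × ZMod p) → ZMod 2 :=
        fun m x => f (m+1) (x + ((m+1 : ℕ) : ZMod p) • e) + f (m+1) x with hgdef
      have hg : ∀ v u : ZMod p × ZMod p,
          ∑ m ∈ Finset.range n, g m (v + (m : ZMod p) • u) = 0 := by
        intro v u
        have h1' := hf (v - u) (u + e)
        have h2' := hf (v - u) u
        rw [Finset.sum_range_succ'] at h1' h2'
        simp only [Nat.cast_zero, zero_smul, add_zero] at h1' h2'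
        have key1 : ∀ m : ℕ, (v - u) + ((m+1 : ℕ) : ZMod p) • (u + e)
            = (v + (m : ZMod p) • u) + ((m+1 : ℕ) : ZMod p) • e := by
          intro m
          push_cast
          rw [smul_add, add_smul, one_smul, add_smul, one_smul]
          abel
        have key2 : ∀ m : ℕ, (v - u) + ((m+1 : ℕ) : ZMod p) • u
            = v + (m : ZMod p) • u := by
          intro m
          push_cast
          rw [add_smul, one_smul]
          abel
        simp only [key1] at h1'
        simp only [key2] at h2'
        have hsplit : ∑ m ∈ Finset.range n, g m (v + (m : ZMod p) • u)
            = (∑ m ∈ Finset.range n,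
                f (m+1) ((v + (m : ZMod p) • u) + ((m+1 : ℕ) : ZMod p) • e))
              + ∑ m ∈ Finset.range n, f (m+1) (v + (m : ZMod p) • u) := by
          rw [← Finset.sum_add_distrib]
        rw [hsplit]
        linear_combination h1' + h2' - (f 0 (v - u)) * htwo
      have hgc := ih hn g hg k hk
      have h0 := hgc x
      simp only [hgdef, zero_add] at h0
      exact h0
    -- for 1 ≤ k+1 ≤ n : f (k+1) is constant
    have hconst : ∀ k, k < n → ∀ v, f (k+1) v = f (k+1) 0 := by
      intro k hk
      have hne : ((k+1 : ℕ) : ZMod p) ≠ 0 := by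
        rw [Ne, ZMod.natCast_eq_zero_iff]
        intro hdvd
        have := Nat.le_of_dvd (Nat.succ_pos k) hdvd
        omega
      set c : ZMod p := ((k+1 : ℕ) : ZMod p) with hc
      have hD : ∀ x a : ZMod p × ZMod p,
          f (k+1) (x + a) + f (k+1) x = f (k+1) a + f (k+1) 0 := by
        intro x a
        have h := hstep k hk (c⁻¹ • a) x
        rw [smul_smul, mul_inv_cancel₀ hne, one_smul] at h
        exact h
      have hsm : ∀ (t : ℕ) (a : ZMod p × ZMod p),
          f (k+1) (t • a) + f (k+1) 0 = t • (f (k+1) a + f (k+1) 0) := by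
        intro t
        induction t with
        | zero =>
          intro a
          simp only [zero_smul, zero_nsmul]
          linear_combination (f (k+1) 0) * htwo
        | succ t iht =>
          intro a
          rw [succ_nsmul, succ_nsmul]
          have h := hD (t • a) a
          have h2 := iht a
          linear_combination h + h2 - (f (k+1) (t • a)) * htwo
      intro v
      have hpa : (p : ℕ) • v = 0 := by
        rw [← Nat.cast_smul_eq_nsmul (ZMod p), ZMod.natCast_self, zero_smul]
      have h := hsm p v
      rw [hpa] at h
      have hp2 : (p : ℕ) • (f (k+1) v + f (k+1) 0) = f (k+1) v + f (k+1) 0 := by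
        rw [← Nat.cast_smul_eq_nsmul (ZMod 2)]
        have : ((p : ℕ) : ZMod 2) = 1 := by
          rw [← ZMod.natCast_mod, Nat.odd_iff.mp hodd]; rfl
        rw [this, one_smul]
      rw [hp2] at h
      linear_combination - h
    intro m hm v
    rcases Nat.eq_zero_or_pos m with rfl | hmpos
    · have h1 := hf v 0
      have h2 := hf 0 0
      simp only [smul_zero, add_zero] at h1 h2
      rw [Finset.sum_range_succ'] at h1 h2
      have hS : ∑ i ∈ Finset.range n, f (i+1) v = ∑ i ∈ Finset.range n, f (i+1) 0 :=
        Finset.sum_congr rfl (fun i hi => hconst i (Finset.mem_range.mp hi) v)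
      linear_combination h1 - h2 - hS
    · obtain ⟨k, rfl⟩ := Nat.exists_eq_add_of_lt hmpos
      simp only [Nat.zero_add]
      exact hconst k (by omega) v

/-- inverse of `ζ m` applied to the first digit data -/
noncomputable def aSt (p : ℕ) (ψ : ZMod p → ZMod p) (ζ : ℕ → ZMod p → ZMod p)
    (m x y : ℕ) : ZMod p :=
  Function.invFun (ζ m)
    ((x : ZMod p) - (y : ZMod p) - (m : ZMod p) * ψ ((y / p : ℕ) : ZMod p))

def bSt (p : ℕ) (φ : ZMod p → ZMod p) (m x y : ℕ) : ZMod p :=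
  (y : ZMod p) - (m : ZMod p) * φ ((x / p : ℕ) : ZMod p)

noncomputable def jSt (p : ℕ) (φ ψ : ZMod p → ZMod p) (ζ : ℕ → ZMod p → ZMod p)
    (m x y : ℕ) : ℕ :=
  p * (aSt p ψ ζ m x y).val + (bSt p φ m x y).val

variable {p : ℕ}

private lemma two_digit_lt (hp : 0 < p) {A B : ℕ} (hA : A < p) (hB : B < p) :
    p * A + B < p ^ 2 := by
  have h3 : p * A ≤ p * (p - 1) := Nat.mul_le_mul_left p (by omega)
  have key : p * (p - 1) + (p - 1) + 1 = p * p := by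
    cases p with
    | zero => omega
    | succ q => simp only [Nat.succ_sub_one]; ring
  rw [pow_two]
  omega

private lemma jSt_lt [NeZero p] (φ ψ : ZMod p → ZMod p) (ζ : ℕ → ZMod p → ZMod p)
    (m x y : ℕ) : jSt p φ ψ ζ m x y < p ^ 2 :=
  two_digit_lt (NeZero.pos p) (ZMod.val_lt _) (ZMod.val_lt _)

private lemma digit_div (hp : 0 < p) (m A B : ℕ) (hA : A < p) (hB : B < p) :
    (m * p ^ 2 + (p * A + B)) / p ^ 2 = m := by
  have hlt : p * A + B < p ^ 2 := two_digit_lt hp hA hB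
  rw [add_comm, Nat.add_mul_div_right _ _ (by positivity), Nat.div_eq_of_lt hlt]
  omega

private lemma digit_mod (hp : 0 < p) (m A B : ℕ) (hA : A < p) (hB : B < p) :
    (m * p ^ 2 + (p * A + B)) % p = B := by
  have h : m * p ^ 2 + (p * A + B) = B + (A + m * p) * p := by ring
  rw [h, Nat.add_mul_mod_self_right, Nat.mod_eq_of_lt hB]

private lemma digit_divmod (hp : 0 < p) (m A B : ℕ) (hA : A < p) (hB : B < p) :
    ((m * p ^ 2 + (p * A + B)) / p) % p = A := by
  have h : m * p ^ 2 + (p * A + B) = B + (A + m * p) * p := by ring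
  rw [h, Nat.add_mul_div_right _ _ hp, Nat.div_eq_of_lt hB, Nat.zero_add,
    Nat.add_mul_mod_self_right, Nat.mod_eq_of_lt hA]

private lemma decomp (hp : 0 < p) (ℓ : ℕ) :
    ℓ / p ^ 2 * p ^ 2 + (p * (ℓ / p % p) + ℓ % p) = ℓ := by
  have h3 : ℓ / p ^ 2 = ℓ / p / p := by rw [Nat.div_div_eq_div_mul, pow_two]
  rw [h3]
  have h1 := Nat.div_add_mod ℓ p
  have h2 := Nat.div_add_mod (ℓ / p) p
  calc ℓ / p / p * p ^ 2 + (p * (ℓ / p % p) + ℓ % p)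
      = p * (p * (ℓ / p / p) + ℓ / p % p) + ℓ % p := by ring
    _ = p * (ℓ / p) + ℓ % p := by rw [h2]
    _ = ℓ := h1

/-- The parity-check condition pins down the row within each block. -/
private lemma cond_iff (hp : p.Prime) [NeZero p] (φ ψ : ZMod p → ZMod p)
    (ζ : ℕ → ZMod p → ZMod p) (ℓ x y : ℕ)
    (hbij : Function.Bijective (ζ (ℓ / p ^ 2))) :
    (((x : ℕ) : ZMod p) =
          ((ℓ : ℕ) : ZMod p) + ζ (ℓ / p ^ 2) ((ℓ / p : ℕ) : ZMod p) +
            ((ℓ / p ^ 2 : ℕ) : ZMod p) *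
              (φ ((x / p : ℕ) : ZMod p) + ψ ((y / p : ℕ) : ZMod p)) ∧
        ((y : ℕ) : ZMod p) =
          ((ℓ : ℕ) : ZMod p) +
            ((ℓ / p ^ 2 : ℕ) : ZMod p) * φ ((x / p : ℕ) : ZMod p))
      ↔ ℓ = ℓ / p ^ 2 * p ^ 2 + jSt p φ ψ ζ (ℓ / p ^ 2) x y := by
  have hp0 : 0 < p := NeZero.pos p
  set m : ℕ := ℓ / p ^ 2 with hm
  set a : ZMod p := aSt p ψ ζ m x y with ha
  set b : ZMod p := bSt p φ m x y with hb
  have hζa : ζ m a = (x : ZMod p) - (y : ZMod p) - (m : ZMod p) * ψ ((y / p : ℕ) : ZMod p) := by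
    rw [ha, aSt]
    exact Function.invFun_eq (hbij.2 _)
  constructor
  · rintro ⟨h1, h2⟩
    have hBval : ℓ % p = b.val := by
      have : ((ℓ : ℕ) : ZMod p) = b := by
        rw [hb, bSt]; linear_combination - h2
      rw [← this, ZMod.val_natCast]
    have hAval : (ℓ / p) % p = a.val := by
      have hz : ζ m ((ℓ / p : ℕ) : ZMod p) = ζ m a := by
        rw [hζa]
        have hlb : ((ℓ : ℕ) : ZMod p) = (y : ZMod p) - (m : ZMod p) * φ ((x / p : ℕ) : ZMod p) := by
          linear_combination - h2
        linear_combination - h1 - hlb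
      have := hbij.1 hz
      rw [← this, ZMod.val_natCast]
    conv_lhs => rw [← decomp hp0 ℓ]
    rw [jSt, hBval, hAval]
  · intro heq
    have hAlt : a.val < p := ZMod.val_lt a
    have hBlt : b.val < p := ZMod.val_lt b
    have hmod : ℓ % p = b.val := by
      conv_lhs => rw [heq]
      rw [jSt]
      exact digit_mod hp0 m _ _ hAlt hBlt
    have hdm : (ℓ / p) % p = a.val := by
      conv_lhs => rw [heq]
      rw [jSt]
      exact digit_divmod hp0 m _ _ hAlt hBlt
    have hcl : ((ℓ : ℕ) : ZMod p) = b := by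
      rw [← ZMod.natCast_mod, hmod, ZMod.natCast_zmod_val]
    have hcl2 : ((ℓ / p : ℕ) : ZMod p) = a := by
      rw [← ZMod.natCast_mod, hdm, ZMod.natCast_zmod_val]
    constructor
    · rw [hcl2, hζa, hcl, hb, bSt]; ring
    · rw [hcl, hb, bSt]; ring

private lemma split_range {M : Type*} [AddCommMonoid M] (S : ℕ → M) (w q : ℕ) :
    ∑ ℓ ∈ Finset.range (w * q), S ℓ
      = ∑ m ∈ Finset.range w, ∑ j ∈ Finset.range q, S (m * q + j) := by
  induction w with
  | zero => simp
  | succ w ih =>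
    rw [Nat.succ_mul, Finset.sum_range_add, ih, Finset.sum_range_succ]

private lemma block_div (hp : 0 < p) (m j : ℕ) (hj : j < p ^ 2) :
    (m * p ^ 2 + j) / p ^ 2 = m := by
  rw [add_comm, Nat.add_mul_div_right _ _ (by positivity), Nat.div_eq_of_lt hj]
  omega

/-- extension of a finitely-indexed vector by zero -/
def cExt {N : ℕ} (c : Fin N → ZMod 2) (ℓ : ℕ) : ZMod 2 :=
  if h : ℓ < N then c ⟨ℓ, h⟩ else 0

private lemma block_bound {w : ℕ} (m j : ℕ) (hm : m < w) (hj : j < p ^ 2) :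
    m * p ^ 2 + j < w * p ^ 2 := by
  have : (m + 1) * p ^ 2 ≤ w * p ^ 2 := Nat.mul_le_mul_right _ (by omega)
  nlinarith

/-- Key: the column sums of `Hmat` against any vector reduce to one row per block. -/
private lemma sum_rows {w : ℕ} (hp : p.Prime) [NeZero p] (φ ψ : ZMod p → ZMod p)
    (ζ : ℕ → ZMod p → ZMod p) (hζ : ∀ m < w, Function.Bijective (ζ m))
    (c : Fin (w * p ^ 2) → ZMod 2) (x y : Fin (p ^ 2)) :
    ∑ ℓ : Fin (w * p ^ 2), Hmat p w φ ψ ζ ℓ (x, y) * c ℓ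
      = ∑ m ∈ Finset.range w, cExt c (m * p ^ 2 + jSt p φ ψ ζ m (x : ℕ) (y : ℕ)) := by
  have hp0 : 0 < p := NeZero.pos p
  set G : ℕ → ZMod 2 := fun L =>
    if L = L / p ^ 2 * p ^ 2 + jSt p φ ψ ζ (L / p ^ 2) (x : ℕ) (y : ℕ) then cExt c L else 0
    with hG
  have hstep1 : ∀ ℓ : Fin (w * p ^ 2), Hmat p w φ ψ ζ ℓ (x, y) * c ℓ = G (ℓ : ℕ) := by
    intro ℓ
    have hm : (ℓ : ℕ) / p ^ 2 < w :=
      (Nat.div_lt_iff_lt_mul (by positivity)).mpr ℓ.isLt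
    have hiff := cond_iff hp φ ψ ζ (ℓ : ℕ) (x : ℕ) (y : ℕ) (hζ _ hm)
    have hcE : cExt c (ℓ : ℕ) = c ℓ := by
      simp only [cExt, Fin.eta, dif_pos ℓ.isLt]
    simp only [Hmat, hG]
    rw [ite_mul, one_mul, zero_mul]
    exact if_congr hiff hcE.symm rfl
  calc ∑ ℓ : Fin (w * p ^ 2), Hmat p w φ ψ ζ ℓ (x, y) * c ℓ
      = ∑ ℓ : Fin (w * p ^ 2), G (ℓ : ℕ) := Finset.sum_congr rfl (fun ℓ _ => hstep1 ℓ)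
    _ = ∑ L ∈ Finset.range (w * p ^ 2), G L := Fin.sum_univ_eq_sum_range G (w * p ^ 2)
    _ = ∑ m ∈ Finset.range w, ∑ j ∈ Finset.range (p ^ 2), G (m * p ^ 2 + j) :=
        split_range G w (p ^ 2)
    _ = ∑ m ∈ Finset.range w, cExt c (m * p ^ 2 + jSt p φ ψ ζ m (x : ℕ) (y : ℕ)) := by
        refine Finset.sum_congr rfl (fun m hm => ?_)
        have hinner : ∀ j ∈ Finset.range (p ^ 2),
            G (m * p ^ 2 + j)
              = if j = jSt p φ ψ ζ m (x : ℕ) (y : ℕ)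
                  then (fun j => cExt c (m * p ^ 2 + j)) j else 0 := by
          intro j hj
          have hj' := Finset.mem_range.mp hj
          rw [hG]
          simp only [block_div hp0 m j hj']
          refine if_congr ?_ rfl rfl
          omega
        rw [Finset.sum_congr rfl hinner, Finset.sum_ite_eq' _ _ _,
          if_pos (Finset.mem_range.mpr (jSt_lt φ ψ ζ m _ _))]

private lemma arith (q w a k : ℕ) (h1 : 1 ≤ w) (h2 : w ≤ q)
    (e1 : a + (w - 1) = w * q) (e3 : a + k = q * q) :
    k = (q - w + 1) * (q - 1) := by
  have h3 : 1 ≤ q := le_trans h1 h2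
  zify [h1, h2, h3] at e1 e3 ⊢
  linear_combination e3 - e1

/-- the block-constant embedding -/
def Emap (p w : ℕ) [NeZero p] : (Fin w → ZMod 2) →ₗ[ZMod 2] (Fin (w * p ^ 2) → ZMod 2) :=
  LinearMap.pi (fun ℓ => LinearMap.proj
    ⟨(ℓ : ℕ) / p ^ 2, (Nat.div_lt_iff_lt_mul (pow_pos (NeZero.pos p) 2)).mpr ℓ.isLt⟩)

def sumFmap (w : ℕ) : (Fin w → ZMod 2) →ₗ[ZMod 2] ZMod 2 :=
  ∑ i : Fin w, LinearMap.proj i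

private lemma sumFmap_apply (w : ℕ) (γ : Fin w → ZMod 2) :
    sumFmap w γ = ∑ i : Fin w, γ i := by
  simp [sumFmap]

private lemma ker_eq {w : ℕ} (hp : p.Prime) [NeZero p] (hodd : Odd p) (hwp : w ≤ p)
    (φ ψ : ZMod p → ZMod p) (hφ : Function.Bijective φ) (hψ : Function.Bijective ψ)
    (ζ : ℕ → ZMod p → ZMod p) (hζ : ∀ m < w, Function.Bijective (ζ m)) :
    LinearMap.ker ((Hmat p w φ ψ ζ)ᵀ.mulVecLin)
      = Submodule.map (Emap p w) (LinearMap.ker (sumFmap w)) := by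
  have hp0 : 0 < p := NeZero.pos p
  have hmv : ∀ (c : Fin (w * p ^ 2) → ZMod 2) (z : Fin (p ^ 2) × Fin (p ^ 2)),
      (Hmat p w φ ψ ζ)ᵀ.mulVecLin c z
        = ∑ ℓ : Fin (w * p ^ 2), Hmat p w φ ψ ζ ℓ z * c ℓ := by
    intro c z
    simp only [Matrix.mulVecLin_apply]
    rw [Matrix.mulVec]
    simp only [dotProduct, Matrix.transpose_apply]
  have hEapp : ∀ (γ : Fin w → ZMod 2) (ℓ : Fin (w * p ^ 2)),
      Emap p w γ ℓ = γ ⟨(ℓ : ℕ) / p ^ 2,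
        (Nat.div_lt_iff_lt_mul (pow_pos hp0 2)).mpr ℓ.isLt⟩ := fun γ ℓ => rfl
  apply le_antisymm
  · -- hard direction
    intro c hc
    have hcol : ∀ x y : Fin (p ^ 2),
        ∑ m ∈ Finset.range w, cExt c (m * p ^ 2 + jSt p φ ψ ζ m (x : ℕ) (y : ℕ)) = 0 := by
      intro x y
      rw [← sum_rows hp φ ψ ζ hζ c x y]
      have h0 := congrFun (LinearMap.mem_ker.mp hc) (x, y)
      rw [hmv] at h0
      simpa using h0
    set F : ℕ → ZMod p × ZMod p → ZMod 2 :=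
      fun m ab => cExt c (m * p ^ 2 + (p * ab.1.val + ab.2.val)) with hF
    set f : ℕ → ZMod p × ZMod p → ZMod 2 :=
      fun m uv => F m (Function.invFun (ζ m) uv.1, uv.2) with hf
    have hjF : ∀ (m xn yn : ℕ),
        cExt c (m * p ^ 2 + jSt p φ ψ ζ m xn yn)
          = F m (aSt p ψ ζ m xn yn, bSt p φ m xn yn) := fun m xn yn => rfl
    have cast2 : ∀ (A t : ZMod p), ((p * A.val + t.val : ℕ) : ZMod p) = t := by
      intro A t
      rw [Nat.cast_add, Nat.cast_mul, ZMod.natCast_self, zero_mul, zero_add,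
        ZMod.natCast_zmod_val]
    have div2 : ∀ (A t : ZMod p), (p * A.val + t.val) / p = A.val := by
      intro A t
      rw [Nat.mul_add_div hp0, Nat.div_eq_of_lt (ZMod.val_lt t), add_zero]
    have hlines : ∀ v u : ZMod p × ZMod p,
        ∑ m ∈ Finset.range w, f m (v + (m : ZMod p) • u) = 0 := by
      intro v u
      obtain ⟨Y, hY⟩ := hψ.2 (-u.1)
      obtain ⟨X, hX⟩ := hφ.2 (-u.2)
      set xn : ℕ := p * X.val + (v.1 + v.2).val with hxn
      set yn : ℕ := p * Y.val + v.2.val with hyn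
      have hxlt : xn < p ^ 2 := two_digit_lt hp0 (ZMod.val_lt X) (ZMod.val_lt _)
      have hylt : yn < p ^ 2 := two_digit_lt hp0 (ZMod.val_lt Y) (ZMod.val_lt _)
      have hxc : ((xn : ℕ) : ZMod p) = v.1 + v.2 := cast2 X _
      have hyc : ((yn : ℕ) : ZMod p) = v.2 := cast2 Y _
      have hxd : ((xn / p : ℕ) : ZMod p) = X := by
        rw [hxn, div2, ZMod.natCast_zmod_val]
      have hyd : ((yn / p : ℕ) : ZMod p) = Y := by
        rw [hyn, div2, ZMod.natCast_zmod_val]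
      have hterm : ∀ m ∈ Finset.range w,
          cExt c (m * p ^ 2 + jSt p φ ψ ζ m xn yn) = f m (v + (m : ZMod p) • u) := by
        intro m _
        rw [hjF]
        have hfst : (v + (m : ZMod p) • u).1 = v.1 + (m : ZMod p) * u.1 := rfl
        have hsnd : (v + (m : ZMod p) • u).2 = v.2 + (m : ZMod p) * u.2 := rfl
        have ha' : aSt p ψ ζ m xn yn = Function.invFun (ζ m) ((v + (m : ZMod p) • u).1) := by
          unfold aSt
          refine congrArg _ ?_
          rw [hxc, hyc, hyd, hY, hfst]
          ring
        have hb' : bSt p φ m xn yn = (v + (m : ZMod p) • u).2 := by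
          unfold bSt
          rw [hyc, hxd, hX, hsnd]
          ring
        rw [ha', hb']
      rw [← Finset.sum_congr rfl hterm]
      exact hcol ⟨xn, hxlt⟩ ⟨yn, hylt⟩
    have hcf := lines_lemma hp hodd w hwp f hlines
    have hFc : ∀ m, m < w → ∀ ab : ZMod p × ZMod p, F m ab = F m 0 := by
      intro m hm ab
      have h1 : F m ab = f m (ζ m ab.1, ab.2) := by
        simp only [hf]
        rw [Function.leftInverse_invFun (hζ m hm).1 ab.1]
      have h4 : F m 0 = f m (ζ m (0 : ZMod p), (0 : ZMod p)) := by
        simp only [hf]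
        rw [Function.leftInverse_invFun (hζ m hm).1]
        rfl
      rw [h1, h4, hcf m hm (ζ m ab.1, ab.2), hcf m hm (ζ m 0, 0)]
    have hmw : ∀ i : Fin w, (i : ℕ) * p ^ 2 < w * p ^ 2 := fun i => by
      have := block_bound (p := p) (i : ℕ) 0 i.isLt (pow_pos hp0 2)
      simpa using this
    have hFm0 : ∀ m (hm : m < w), F m 0 = cExt c (m * p ^ 2) := by
      intro m hm
      have h5 : F m 0 = cExt c (m * p ^ 2 + (p * (0 : ZMod p).val + (0 : ZMod p).val)) := rfl
      rw [h5, ZMod.val_zero]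
      norm_num
    refine Submodule.mem_map.mpr ⟨fun i => cExt c ((i : ℕ) * p ^ 2), ?_, ?_⟩
    · rw [LinearMap.mem_ker, sumFmap_apply]
      have h0 : (0 : ℕ) < p ^ 2 := pow_pos hp0 2
      have hz := hcol ⟨0, h0⟩ ⟨0, h0⟩
      have hterm : ∀ m ∈ Finset.range w,
          cExt c (m * p ^ 2 + jSt p φ ψ ζ m ((⟨0, h0⟩ : Fin (p ^ 2)) : ℕ)
            ((⟨0, h0⟩ : Fin (p ^ 2)) : ℕ)) = cExt c (m * p ^ 2) := by
        intro m hm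
        rw [hjF, hFc m (Finset.mem_range.mp hm), hFm0 m (Finset.mem_range.mp hm)]
      rw [Finset.sum_congr rfl hterm] at hz
      rw [Fin.sum_univ_eq_sum_range (fun m => cExt c (m * p ^ 2)) w]
      exact hz
    · funext ℓ
      rw [hEapp]
      set m : ℕ := (ℓ : ℕ) / p ^ 2 with hmdef
      have hmlt : m < w := (Nat.div_lt_iff_lt_mul (pow_pos hp0 2)).mpr ℓ.isLt
      have hA : (ℓ : ℕ) / p % p < p := Nat.mod_lt _ hp0
      have hB : (ℓ : ℕ) % p < p := Nat.mod_lt _ hp0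
      have hdec : m * p ^ 2 + (p * ((ℓ : ℕ) / p % p) + (ℓ : ℕ) % p) = (ℓ : ℕ) :=
        decomp hp0 (ℓ : ℕ)
      have hvals : p * (((((ℓ : ℕ) / p % p : ℕ) : ZMod p)).val)
            + ((((ℓ : ℕ) % p : ℕ) : ZMod p)).val
          = p * ((ℓ : ℕ) / p % p) + (ℓ : ℕ) % p := by
        rw [ZMod.val_natCast_of_lt hA, ZMod.val_natCast_of_lt hB]
      have hc1 : cExt c ((ℓ : ℕ))
          = F m (((((ℓ : ℕ) / p % p : ℕ) : ZMod p)), ((((ℓ : ℕ) % p : ℕ) : ZMod p))) := by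
        simp only [hF]
        rw [hvals, hdec]
      have hc2 : cExt c ((ℓ : ℕ)) = c ℓ := by
        simp only [cExt, Fin.eta, dif_pos ℓ.isLt]
      rw [← hc2, hc1, hFc m hmlt, hFm0 m hmlt]
  · -- easy direction
    rintro cc ⟨γ, hγ, rfl⟩
    rw [LinearMap.mem_ker]
    funext z
    obtain ⟨x, y⟩ := z
    rw [hmv, sum_rows hp φ ψ ζ hζ _ x y]
    have hterm : ∀ m ∈ Finset.range w,
        cExt (Emap p w γ) (m * p ^ 2 + jSt p φ ψ ζ m (x : ℕ) (y : ℕ))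
          = (fun m => if h : m < w then γ ⟨m, h⟩ else 0) m := by
      intro m hm
      have hm' := Finset.mem_range.mp hm
      have hlt : m * p ^ 2 + jSt p φ ψ ζ m (x : ℕ) (y : ℕ) < w * p ^ 2 :=
        block_bound m _ hm' (jSt_lt φ ψ ζ m _ _)
      have h1 : cExt (Emap p w γ) (m * p ^ 2 + jSt p φ ψ ζ m (x : ℕ) (y : ℕ))
          = Emap p w γ ⟨_, hlt⟩ := dif_pos hlt
      rw [h1, hEapp]
      have hq : ((⟨m * p ^ 2 + jSt p φ ψ ζ m (x : ℕ) (y : ℕ), hlt⟩ : Fin (w * p ^ 2)) : ℕ)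
            / p ^ 2 = m := block_div hp0 m _ (jSt_lt φ ψ ζ m _ _)
      simp only [dif_pos hm']
      exact congrArg γ (Fin.ext hq)
    rw [Finset.sum_congr rfl hterm,
      ← Fin.sum_univ_eq_sum_range (fun m => if h : m < w then γ ⟨m, h⟩ else 0) w]
    have : ∀ i : Fin w, (if h : (i : ℕ) < w then γ ⟨(i : ℕ), h⟩ else 0) = γ i := by
      intro i
      rw [dif_pos i.isLt, Fin.eta]
    rw [Finset.sum_congr rfl (fun i _ => this i)]
    have := LinearMap.mem_ker.mp hγ
    rw [sumFmap_apply] at this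
    simpa using this

end Aux

theorem stmt_9 (p w : ℕ) (hp : p.Prime) (hodd : Odd p) (hw1 : 1 ≤ w) (hwp : w ≤ p)
    (φ ψ : ZMod p → ZMod p) (hφ : Function.Bijective φ) (hψ : Function.Bijective ψ)
    (ζ : ℕ → ZMod p → ZMod p) (hζ : ∀ m < w, Function.Bijective (ζ m)) :
    Module.finrank (ZMod 2)
        ↥(LinearMap.ker (Matrix.mulVecLin (Hmat p w φ ψ ζ))) =
      (p ^ 2 - w + 1) * (p ^ 2 - 1) := by
  haveI : Fact p.Prime := ⟨hp⟩
  haveI : NeZero p := ⟨hp.ne_zero⟩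
  have hp0 : 0 < p := hp.pos
  have hker := ker_eq hp hodd hwp φ ψ hφ hψ ζ hζ
  -- injectivity of Emap
  have hEinj : Function.Injective (Emap p w) := by
    intro γ γ' h
    funext i
    have hmw : (i : ℕ) * p ^ 2 < w * p ^ 2 := by
      have := block_bound (p := p) (i : ℕ) 0 i.isLt (pow_pos hp0 2)
      simpa using this
    have h2 := congrFun h ⟨(i : ℕ) * p ^ 2, hmw⟩
    have hq : (((⟨(i : ℕ) * p ^ 2, hmw⟩ : Fin (w * p ^ 2)) : ℕ)) / p ^ 2 = (i : ℕ) :=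
      Nat.mul_div_cancel _ (pow_pos hp0 2)
    have hfin : ∀ hh, (⟨(((⟨(i : ℕ) * p ^ 2, hmw⟩ : Fin (w * p ^ 2)) : ℕ)) / p ^ 2, hh⟩
        : Fin w) = i := fun hh => Fin.ext hq
    simpa [Emap, LinearMap.pi_apply, hfin] using h2
  have hkerT : Module.finrank (ZMod 2)
      (LinearMap.ker ((Hmat p w φ ψ ζ)ᵀ.mulVecLin)) = w - 1 := by
    rw [hker,
      ← LinearEquiv.finrank_eq (Submodule.equivMapOfInjective (Emap p w) hEinj
        (LinearMap.ker (sumFmap w)))]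
    have hsurj : Function.Surjective (sumFmap w) := by
      intro z
      refine ⟨Pi.single ⟨0, hw1⟩ z, ?_⟩
      rw [sumFmap_apply]
      simp
    have hrange : LinearMap.range (sumFmap w) = ⊤ := LinearMap.range_eq_top.mpr hsurj
    have hrn := LinearMap.finrank_range_add_finrank_ker (sumFmap w)
    rw [hrange, finrank_top, Module.finrank_self, Module.finrank_pi,
      Fintype.card_fin] at hrn
    omega
  have e1 := LinearMap.finrank_range_add_finrank_ker ((Hmat p w φ ψ ζ)ᵀ.mulVecLin)
  rw [hkerT, Module.finrank_pi, Fintype.card_fin] at e1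
  have e2 : (Hmat p w φ ψ ζ)ᵀ.rank = (Hmat p w φ ψ ζ).rank :=
    Matrix.rank_transpose _
  unfold Matrix.rank at e2
  have e3 := LinearMap.finrank_range_add_finrank_ker ((Hmat p w φ ψ ζ).mulVecLin)
  rw [Module.finrank_pi, Fintype.card_prod, Fintype.card_fin] at e3
  rw [e2] at e1
  exact arith (p ^ 2) w _ _ hw1 (le_trans hwp (Nat.le_self_pow two_ne_zero p)) e1 e3
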